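/- arXiv:2303.10567 — 4 statements merged into one kernel-verified Lean document; each statement's English description precedes it below -/
import Mathlib

section
/- Let Λ₁, Λ₂, D, K, M be symmetric positive definite real n×n matrices. Let y₁, y₂ : [0,∞) → ℝⁿ be C² curves satisfying Λᵢ·yᵢ'' + D·yᵢ' + K·yᵢ = F for i = 1, 2, where F(t) = −M·(y₁''(t) + y₂''(t)) is the inertial force of a grasped object whose velocity is −(y₁' + y₂'). Then the total storage function S_tot(t) = Σᵢ [½·yᵢ'ᵀΛᵢ·yᵢ' + ½·yᵢᵀK·yᵢ] + ½·(y₁' + y₂')ᵀM·(y₁' + y₂') satisfies S_tot'(t) ≤ −λ_min(D)·(‖y₁'(t)‖² + ‖y₂'(t)‖²) for all t ≥ 0. (Dissipation inequality in the proof of the paper's Theorem 3 on collaborative grasping by two AMs.) -/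
open Matrix Filter Topology

/-- The minimum eigenvalue of a Hermitian (here: real symmetric) matrix. -/
noncomputable def lamMin {n : ℕ} {D : Matrix (Fin n) (Fin n) ℝ}
    (hD : D.IsHermitian) : ℝ := ⨅ i, hD.eigenvalues i

lemma star_eq_transpose {n : ℕ} (U : Matrix (Fin n) (Fin n) ℝ) : star U = Uᵀ := by
  ext i j; simp [Matrix.conjTranspose_apply]

lemma symm_dot {n : ℕ} {A : Matrix (Fin n) (Fin n) ℝ} (hA : A.IsHermitian)
    (x y : Fin n → ℝ) : x ⬝ᵥ (A *ᵥ y) = y ⬝ᵥ (A *ᵥ x) := by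
  have hAt : Aᵀ = A := by
    ext i j
    simpa [Matrix.conjTranspose_apply] using congrFun (congrFun hA.eq i) j
  have h1 : x ᵥ* A = A *ᵥ x := by rw [← hAt, Matrix.vecMul_transpose, hAt]
  rw [Matrix.dotProduct_mulVec, h1, dotProduct_comm]

lemma hasDerivAt_dot {n : ℕ} (A : Matrix (Fin n) (Fin n) ℝ)
    {u v : ℝ → Fin n → ℝ} {u' v' : Fin n → ℝ} {t : ℝ}
    (hu : HasDerivAt u u' t) (hv : HasDerivAt v v' t) :
    HasDerivAt (fun s => u s ⬝ᵥ (A *ᵥ v s))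
      (u' ⬝ᵥ (A *ᵥ v t) + u t ⬝ᵥ (A *ᵥ v')) t := by
  have h : HasDerivAt (fun s => ∑ i, u s i * ∑ j, A i j * v s j)
      (∑ i, (u' i * ∑ j, A i j * v t j + u t i * ∑ j, A i j * v' j)) t := by
    refine HasDerivAt.fun_sum fun i _ => ?_
    exact (hasDerivAt_pi.mp hu i).mul
      (HasDerivAt.fun_sum fun j _ => (hasDerivAt_pi.mp hv j).const_mul (A i j))
  convert h using 1
  all_goals simp [dotProduct, mulVec, Finset.sum_add_distrib]

lemma lamMin_quad_le {n : ℕ} {D : Matrix (Fin n) (Fin n) ℝ} (hD : D.IsHermitian)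
    (x : Fin n → ℝ) : lamMin hD * (x ⬝ᵥ x) ≤ x ⬝ᵥ (D *ᵥ x) := by
  rcases Nat.eq_zero_or_pos n with h0 | hn
  · subst h0; simp [dotProduct]
  have : Nonempty (Fin n) := ⟨⟨0, hn⟩⟩
  set U : Matrix (Fin n) (Fin n) ℝ :=
    (Matrix.IsHermitian.eigenvectorUnitary hD : Matrix (Fin n) (Fin n) ℝ) with hU
  set z : Fin n → ℝ := star U *ᵥ x with hz
  have hUU : U * star U = 1 :=
    (Matrix.mem_unitaryGroup_iff).mp (Matrix.IsHermitian.eigenvectorUnitary hD).2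
  have hdiageq : Matrix.diagonal ((RCLike.ofReal ∘ hD.eigenvalues) : Fin n → ℝ)
      = Matrix.diagonal hD.eigenvalues := by
    congr 1
  have hDx : D *ᵥ x = U *ᵥ (Matrix.diagonal hD.eigenvalues *ᵥ z) := by
    conv_lhs => rw [hD.spectral_theorem]
    rw [Unitary.conjStarAlgAut_apply, ← Matrix.mulVec_mulVec, ← Matrix.mulVec_mulVec, hdiageq, hz, hU]
  have hUdot : ∀ w : Fin n → ℝ, x ⬝ᵥ (U *ᵥ w) = z ⬝ᵥ w := by
    intro w
    rw [Matrix.dotProduct_mulVec]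
    congr 1
    rw [hz, star_eq_transpose, Matrix.mulVec_transpose]
  have hzz : z ⬝ᵥ z = x ⬝ᵥ x := by
    conv_lhs => rw [← hUdot z]
    rw [hz, Matrix.mulVec_mulVec, hUU, Matrix.one_mulVec]
  rw [hDx, hUdot, ← hzz]
  have hdiag : z ⬝ᵥ (Matrix.diagonal hD.eigenvalues *ᵥ z) = ∑ i, hD.eigenvalues i * (z i)^2 := by
    simp [dotProduct, Matrix.mulVec_diagonal]
    exact Finset.sum_congr rfl fun i _ => by ring
  rw [hdiag]
  have hzz' : z ⬝ᵥ z = ∑ i, (z i)^2 := by simp [dotProduct, sq]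
  rw [hzz', Finset.mul_sum]
  refine Finset.sum_le_sum fun i _ => ?_
  have hmin : lamMin hD ≤ hD.eigenvalues i :=
    ciInf_le (Set.Finite.bddBelow (Set.finite_range _)) i
  nlinarith [sq_nonneg (z i)]

/-- Dissipation inequality in the proof of Theorem 3 (collaborative
grasping by two AMs).  With `F = −M (y₁'' + y₂'')` the inertial force of the
grasped object, the total storage function
`S_tot = Σᵢ [½ yᵢ'ᵀ Λᵢ yᵢ' + ½ yᵢᵀ K yᵢ] + ½ (y₁'+y₂')ᵀ M (y₁'+y₂')`
satisfies `S_tot'(t) ≤ −λ_min(D) (‖y₁'(t)‖² + ‖y₂'(t)‖²)` for all `t ≥ 0`. -/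
theorem stmt_7 {n : ℕ} (Λ₁ Λ₂ D K M : Matrix (Fin n) (Fin n) ℝ)
    (hΛ₁ : Λ₁.PosDef) (hΛ₂ : Λ₂.PosDef) (hD : D.PosDef) (hK : K.PosDef)
    (hM : M.PosDef)
    (y₁ y₂ : ℝ → Fin n → ℝ) (hy₁ : ContDiff ℝ 2 y₁) (hy₂ : ContDiff ℝ 2 y₂)
    (F : ℝ → Fin n → ℝ)
    (hF : ∀ t : ℝ, F t = -(M *ᵥ (deriv (deriv y₁) t + deriv (deriv y₂) t)))
    (hODE₁ : ∀ t : ℝ, 0 ≤ t →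
      Λ₁ *ᵥ (deriv (deriv y₁) t) + D *ᵥ (deriv y₁ t) + K *ᵥ (y₁ t) = F t)
    (hODE₂ : ∀ t : ℝ, 0 ≤ t →
      Λ₂ *ᵥ (deriv (deriv y₂) t) + D *ᵥ (deriv y₂ t) + K *ᵥ (y₂ t) = F t) :
    ∀ Stot : ℝ → ℝ,
      Stot = (fun t =>
          ((1 / 2) * (deriv y₁ t ⬝ᵥ (Λ₁ *ᵥ deriv y₁ t))
            + (1 / 2) * (y₁ t ⬝ᵥ (K *ᵥ y₁ t)))
          + ((1 / 2) * (deriv y₂ t ⬝ᵥ (Λ₂ *ᵥ deriv y₂ t))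
            + (1 / 2) * (y₂ t ⬝ᵥ (K *ᵥ y₂ t)))
          + (1 / 2) * ((deriv y₁ t + deriv y₂ t) ⬝ᵥ (M *ᵥ (deriv y₁ t + deriv y₂ t)))) →
      ∀ t : ℝ, 0 ≤ t →
        deriv Stot t ≤ -(lamMin hD.isHermitian)
          * (deriv y₁ t ⬝ᵥ deriv y₁ t + deriv y₂ t ⬝ᵥ deriv y₂ t) := by
  intro Stot hStot t ht
  -- differentiability
  have h2 : (2 : WithTop ℕ∞) = (1 : WithTop ℕ∞) + 1 := by norm_num
  have hy₁' : ContDiff ℝ ((1 : WithTop ℕ∞) + 1) y₁ := by rw [← h2]; exact hy₁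
  have hy₂' : ContDiff ℝ ((1 : WithTop ℕ∞) + 1) y₂ := by rw [← h2]; exact hy₂
  have hdy₁ : ContDiff ℝ 1 (deriv y₁) := (contDiff_succ_iff_deriv.mp hy₁').2.2
  have hdy₂ : ContDiff ℝ 1 (deriv y₂) := (contDiff_succ_iff_deriv.mp hy₂').2.2
  have hY₁ : HasDerivAt y₁ (deriv y₁ t) t :=
    ((hy₁.differentiable (by norm_num)) t).hasDerivAt
  have hY₂ : HasDerivAt y₂ (deriv y₂ t) t :=
    ((hy₂.differentiable (by norm_num)) t).hasDerivAt
  have hY₁' : HasDerivAt (deriv y₁) (deriv (deriv y₁) t) t :=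
    ((hdy₁.differentiable one_ne_zero) t).hasDerivAt
  have hY₂' : HasDerivAt (deriv y₂) (deriv (deriv y₂) t) t :=
    ((hdy₂.differentiable one_ne_zero) t).hasDerivAt
  set a := y₁ t; set b := y₂ t
  set a' := deriv y₁ t; set b' := deriv y₂ t
  set a'' := deriv (deriv y₁) t; set b'' := deriv (deriv y₂) t
  -- derivative of Stot
  have hS : HasDerivAt Stot
      (((1/2) * (a'' ⬝ᵥ (Λ₁ *ᵥ a') + a' ⬝ᵥ (Λ₁ *ᵥ a''))
        + (1/2) * (a' ⬝ᵥ (K *ᵥ a) + a ⬝ᵥ (K *ᵥ a')))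
      + ((1/2) * (b'' ⬝ᵥ (Λ₂ *ᵥ b') + b' ⬝ᵥ (Λ₂ *ᵥ b''))
        + (1/2) * (b' ⬝ᵥ (K *ᵥ b) + b ⬝ᵥ (K *ᵥ b')))
      + (1/2) * ((a'' + b'') ⬝ᵥ (M *ᵥ (a' + b')) + (a' + b') ⬝ᵥ (M *ᵥ (a'' + b'')))) t := by
    rw [hStot]
    exact ((((hasDerivAt_dot Λ₁ hY₁' hY₁').const_mul (1/2 : ℝ)).add
        ((hasDerivAt_dot K hY₁ hY₁).const_mul (1/2 : ℝ))).add
      (((hasDerivAt_dot Λ₂ hY₂' hY₂').const_mul (1/2 : ℝ)).add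
        ((hasDerivAt_dot K hY₂ hY₂).const_mul (1/2 : ℝ)))).add
      ((hasDerivAt_dot M (hY₁'.add hY₂') (hY₁'.add hY₂')).const_mul (1/2 : ℝ))
  rw [hS.deriv]
  -- use symmetry
  have sΛ₁ : a'' ⬝ᵥ (Λ₁ *ᵥ a') = a' ⬝ᵥ (Λ₁ *ᵥ a'') := symm_dot hΛ₁.isHermitian _ _
  have sΛ₂ : b'' ⬝ᵥ (Λ₂ *ᵥ b') = b' ⬝ᵥ (Λ₂ *ᵥ b'') := symm_dot hΛ₂.isHermitian _ _
  have sK₁ : a ⬝ᵥ (K *ᵥ a') = a' ⬝ᵥ (K *ᵥ a) := symm_dot hK.isHermitian _ _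
  have sK₂ : b ⬝ᵥ (K *ᵥ b') = b' ⬝ᵥ (K *ᵥ b) := symm_dot hK.isHermitian _ _
  have sM : (a'' + b'') ⬝ᵥ (M *ᵥ (a' + b')) = (a' + b') ⬝ᵥ (M *ᵥ (a'' + b'')) :=
    symm_dot hM.isHermitian _ _
  -- ODEs
  have e₁ : Λ₁ *ᵥ a'' = F t - D *ᵥ a' - K *ᵥ a := by
    have h := hODE₁ t ht
    rw [← h]; abel
  have e₂ : Λ₂ *ᵥ b'' = F t - D *ᵥ b' - K *ᵥ b := by
    have h := hODE₂ t ht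
    rw [← h]; abel
  have eM : M *ᵥ (a'' + b'') = -(F t) := by rw [hF t]; abel
  rw [sΛ₁, sΛ₂, sK₁, sK₂, sM, e₁, e₂, eM]
  simp only [dotProduct_sub, dotProduct_neg, add_dotProduct]
  have hq₁ := lamMin_quad_le hD.isHermitian a'
  have hq₂ := lamMin_quad_le hD.isHermitian b'
  ring_nf
  nlinarith [hq₁, hq₂]
end

section
/- Let Λ₁, Λ₂, D, K, M be symmetric positive definite real n×n matrices, and y₁, y₂ : [0,∞) → ℝⁿ C² curves satisfying Λᵢ·yᵢ'' + D·yᵢ' + K·yᵢ = F with F = −M·(y₁'' + y₂''). Then ∫₀^∞ (‖y₁'(t)‖² + ‖y₂'(t)‖²) dt ≤ S_tot(0)/λ_min(D), where S_tot(0) = Σᵢ [½·yᵢ'(0)ᵀΛᵢ·yᵢ'(0) + ½·yᵢ(0)ᵀK·yᵢ(0)] + ½·(y₁'(0) + y₂'(0))ᵀM·(y₁'(0) + y₂'(0)). In particular the velocities y₁', y₂' are square-integrable on [0,∞). (Integral step in the proof of the paper's Theorem 3.) -/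
open Matrix Filter Topology MeasureTheory

variable {n : ℕ}

lemma sym_dot {A : Matrix (Fin n) (Fin n) ℝ} (hA : A.IsHermitian)
    (x u : Fin n → ℝ) : x ⬝ᵥ (A *ᵥ u) = u ⬝ᵥ (A *ᵥ x) := by
  rw [dotProduct_mulVec, ← mulVec_transpose, dotProduct_comm]
  congr 1
  rw [show Aᵀ = A from hA]

lemma hasDerivAt_dot_s8 {f g : ℝ → Fin n → ℝ} {f' g' : Fin n → ℝ} {t : ℝ}
    (hf : HasDerivAt f f' t) (hg : HasDerivAt g g' t) :
    HasDerivAt (fun t => f t ⬝ᵥ g t) (f' ⬝ᵥ g t + f t ⬝ᵥ g') t := by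
  simp only [dotProduct, Finset.sum_add_distrib.symm]
  exact HasDerivAt.fun_sum fun i _ => ((hasDerivAt_pi.1 hf i).mul (hasDerivAt_pi.1 hg i))

lemma hasDerivAt_mulVec (A : Matrix (Fin n) (Fin n) ℝ) {g : ℝ → Fin n → ℝ} {g' : Fin n → ℝ}
    {t : ℝ} (hg : HasDerivAt g g' t) :
    HasDerivAt (fun t => A *ᵥ g t) (A *ᵥ g') t := by
  rw [hasDerivAt_pi]
  intro i
  simp only [mulVec, dotProduct]
  exact HasDerivAt.fun_sum fun j _ => (hasDerivAt_pi.1 hg j).const_mul (A i j)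

lemma hasDerivAt_quad {A : Matrix (Fin n) (Fin n) ℝ} (hA : A.IsHermitian)
    {g : ℝ → Fin n → ℝ} {g' : Fin n → ℝ} {t : ℝ} (hg : HasDerivAt g g' t) :
    HasDerivAt (fun t => (1/2 : ℝ) * (g t ⬝ᵥ (A *ᵥ g t))) (g' ⬝ᵥ (A *ᵥ g t)) t := by
  have h := (hasDerivAt_dot_s8 hg (hasDerivAt_mulVec A hg)).const_mul (1/2 : ℝ)
  convert h using 1
  · rfl
  · rfl
  rw [sym_dot hA (g t) g']
  ring

lemma cont_dot {f g : ℝ → Fin n → ℝ} (hf : Continuous f) (hg : Continuous g) :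
    Continuous (fun t => f t ⬝ᵥ g t) := by
  simp only [dotProduct]
  exact continuous_finset_sum _ fun i _ =>
    ((continuous_apply i).comp hf).mul ((continuous_apply i).comp hg)

lemma cont_mulVec (A : Matrix (Fin n) (Fin n) ℝ) {g : ℝ → Fin n → ℝ} (hg : Continuous g) :
    Continuous (fun t => A *ᵥ g t) := by
  refine continuous_pi fun i => ?_
  simp only [mulVec, dotProduct]
  exact continuous_finset_sum _ fun j _ => continuous_const.mul ((continuous_apply j).comp hg)

lemma quad_lower {A : Matrix (Fin n) (Fin n) ℝ} (hA : A.PosDef) (x : Fin n → ℝ) :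
    lamMin hA.isHermitian * (x ⬝ᵥ x) ≤ x ⬝ᵥ (A *ᵥ x) := by
  have h := hA.isHermitian
  set U : Matrix (Fin n) (Fin n) ℝ := (h.eigenvectorUnitary : Matrix (Fin n) (Fin n) ℝ) with hU
  have hUU : U * star U = 1 := (Matrix.mem_unitaryGroup_iff).mp (h.eigenvectorUnitary).2
  have hstar : star U = Uᵀ := by
    rw [Matrix.star_eq_conjTranspose, conjTranspose_eq_transpose_of_trivial]
  set z : Fin n → ℝ := (star U) *ᵥ x with hz
  have key : x ⬝ᵥ (A *ᵥ x) = ∑ i, h.eigenvalues i * (z i)^2 := by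
    conv_lhs => rw [h.spectral_theorem, Unitary.conjStarAlgAut_apply]
    rw [← hU, ← mulVec_mulVec, ← mulVec_mulVec, dotProduct_mulVec x U, ← mulVec_transpose,
      ← hstar, ← hz]
    simp [dotProduct, mulVec_diagonal, Function.comp, pow_two, mul_comm, mul_assoc, mul_left_comm]
  have key2 : x ⬝ᵥ x = ∑ i, (z i)^2 := by
    have hzz : z ⬝ᵥ z = x ⬝ᵥ x := by
      calc z ⬝ᵥ z = z ⬝ᵥ (star U *ᵥ x) := rfl
        _ = ((star U)ᵀ *ᵥ z) ⬝ᵥ x := by rw [dotProduct_mulVec, ← mulVec_transpose]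
        _ = (U *ᵥ z) ⬝ᵥ x := by rw [hstar, transpose_transpose]
        _ = ((U * star U) *ᵥ x) ⬝ᵥ x := by rw [hz, mulVec_mulVec]
        _ = x ⬝ᵥ x := by rw [hUU, one_mulVec]
    rw [← hzz]
    simp [dotProduct, pow_two]
  rw [key, key2, Finset.mul_sum]
  refine Finset.sum_le_sum fun i _ => ?_
  have h1 : lamMin h ≤ h.eigenvalues i :=
    ciInf_le (Set.Finite.bddBelow (Set.finite_range _)) i
  nlinarith [sq_nonneg (z i), h1]

lemma lamMin_pos {A : Matrix (Fin n) (Fin n) ℝ} [NeZero n] (hA : A.PosDef) :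
    0 < lamMin hA.isHermitian := by
  obtain ⟨i, hi⟩ := exists_eq_ciInf_of_finite (f := hA.isHermitian.eigenvalues)
  rw [lamMin, ← hi]
  exact hA.eigenvalues_pos i

lemma quad_nonneg {A : Matrix (Fin n) (Fin n) ℝ} (hA : A.PosDef) (x : Fin n → ℝ) :
    0 ≤ x ⬝ᵥ (A *ᵥ x) := by
  have := hA.posSemidef.re_dotProduct_nonneg x
  simpa using this

lemma dot_self_nonneg (x : Fin n → ℝ) : 0 ≤ x ⬝ᵥ x :=
  Finset.sum_nonneg fun i _ => mul_self_nonneg (x i)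

/-- Integral step in the proof of Theorem 3.  The velocities of the
two AMs are square-integrable on `[0,∞)` with
`∫₀^∞ (‖y₁'‖² + ‖y₂'‖²) dt ≤ S_tot(0) / λ_min(D)`. -/
theorem stmt_8 {n : ℕ} (Λ₁ Λ₂ D K M : Matrix (Fin n) (Fin n) ℝ)
    (hΛ₁ : Λ₁.PosDef) (hΛ₂ : Λ₂.PosDef) (hD : D.PosDef) (hK : K.PosDef)
    (hM : M.PosDef)
    (y₁ y₂ : ℝ → Fin n → ℝ) (hy₁ : ContDiff ℝ 2 y₁) (hy₂ : ContDiff ℝ 2 y₂)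
    (F : ℝ → Fin n → ℝ)
    (hF : ∀ t : ℝ, F t = -(M *ᵥ (deriv (deriv y₁) t + deriv (deriv y₂) t)))
    (hODE₁ : ∀ t : ℝ, 0 ≤ t →
      Λ₁ *ᵥ (deriv (deriv y₁) t) + D *ᵥ (deriv y₁ t) + K *ᵥ (y₁ t) = F t)
    (hODE₂ : ∀ t : ℝ, 0 ≤ t →
      Λ₂ *ᵥ (deriv (deriv y₂) t) + D *ᵥ (deriv y₂ t) + K *ᵥ (y₂ t) = F t) :
    IntegrableOn (fun t => deriv y₁ t ⬝ᵥ deriv y₁ t + deriv y₂ t ⬝ᵥ deriv y₂ t)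
        (Set.Ici (0:ℝ)) ∧
    (∫ t in Set.Ici (0:ℝ), (deriv y₁ t ⬝ᵥ deriv y₁ t + deriv y₂ t ⬝ᵥ deriv y₂ t))
      ≤ (((1 / 2) * (deriv y₁ 0 ⬝ᵥ (Λ₁ *ᵥ deriv y₁ 0))
            + (1 / 2) * (y₁ 0 ⬝ᵥ (K *ᵥ y₁ 0)))
          + ((1 / 2) * (deriv y₂ 0 ⬝ᵥ (Λ₂ *ᵥ deriv y₂ 0))
            + (1 / 2) * (y₂ 0 ⬝ᵥ (K *ᵥ y₂ 0)))
          + (1 / 2) * ((deriv y₁ 0 + deriv y₂ 0) ⬝ᵥ (M *ᵥ (deriv y₁ 0 + deriv y₂ 0))))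
        / lamMin hD.isHermitian := by
  rcases Nat.eq_zero_or_pos n with hn | hn
  · subst hn
    have hz : ∀ (u w : Fin 0 → ℝ), u ⬝ᵥ w = 0 := fun u w => by simp [dotProduct]
    constructor
    · simp only [hz, add_zero]
      exact integrableOn_zero
    · simp [hz]
  haveI : NeZero n := ⟨hn.ne'⟩
  -- regularity
  have h2 : (2 : WithTop ℕ∞) = 1 + 1 := by norm_num
  obtain ⟨hdiff₁, -, hcd₁⟩ := (contDiff_succ_iff_deriv).mp (h2 ▸ hy₁)
  obtain ⟨hdiff₂, -, hcd₂⟩ := (contDiff_succ_iff_deriv).mp (h2 ▸ hy₂)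
  obtain ⟨hvdiff₁, hacont₁⟩ := contDiff_one_iff_deriv.mp hcd₁
  obtain ⟨hvdiff₂, hacont₂⟩ := contDiff_one_iff_deriv.mp hcd₂
  have hvcont₁ : Continuous (deriv y₁) := hvdiff₁.continuous
  have hvcont₂ : Continuous (deriv y₂) := hvdiff₂.continuous
  have Hy₁ : ∀ t, HasDerivAt y₁ (deriv y₁ t) t := fun t => (hdiff₁ t).hasDerivAt
  have Hy₂ : ∀ t, HasDerivAt y₂ (deriv y₂ t) t := fun t => (hdiff₂ t).hasDerivAt
  have Hv₁ : ∀ t, HasDerivAt (deriv y₁) (deriv (deriv y₁) t) t := fun t => (hvdiff₁ t).hasDerivAt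
  have Hv₂ : ∀ t, HasDerivAt (deriv y₂) (deriv (deriv y₂) t) t := fun t => (hvdiff₂ t).hasDerivAt
  set lam := lamMin hD.isHermitian with hlam
  have hlampos : 0 < lam := lamMin_pos hD
  set S : ℝ → ℝ := fun t =>
      ((1/2 : ℝ) * (deriv y₁ t ⬝ᵥ (Λ₁ *ᵥ deriv y₁ t)) + (1/2 : ℝ) * (y₁ t ⬝ᵥ (K *ᵥ y₁ t)))
      + ((1/2 : ℝ) * (deriv y₂ t ⬝ᵥ (Λ₂ *ᵥ deriv y₂ t)) + (1/2 : ℝ) * (y₂ t ⬝ᵥ (K *ᵥ y₂ t)))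
      + (1/2 : ℝ) * ((deriv y₁ t + deriv y₂ t) ⬝ᵥ (M *ᵥ (deriv y₁ t + deriv y₂ t))) with hSdef
  set g : ℝ → ℝ := fun t =>
      deriv y₁ t ⬝ᵥ (D *ᵥ deriv y₁ t) + deriv y₂ t ⬝ᵥ (D *ᵥ deriv y₂ t) with hgdef
  set f : ℝ → ℝ := fun t =>
      deriv y₁ t ⬝ᵥ deriv y₁ t + deriv y₂ t ⬝ᵥ deriv y₂ t with hfdef
  have hfc : Continuous f := (cont_dot hvcont₁ hvcont₁).add (cont_dot hvcont₂ hvcont₂)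
  have hgc : Continuous g :=
    (cont_dot hvcont₁ (cont_mulVec D hvcont₁)).add (cont_dot hvcont₂ (cont_mulVec D hvcont₂))
  have hfnn : ∀ t, 0 ≤ f t := fun t =>
    add_nonneg (dot_self_nonneg _) (dot_self_nonneg _)
  have hSnn : ∀ t, 0 ≤ S t := by
    intro t
    have q1 := quad_nonneg hΛ₁ (deriv y₁ t)
    have q2 := quad_nonneg hK (y₁ t)
    have q3 := quad_nonneg hΛ₂ (deriv y₂ t)
    have q4 := quad_nonneg hK (y₂ t)
    have q5 := quad_nonneg hM (deriv y₁ t + deriv y₂ t)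
    simp only [hSdef]
    positivity
  -- derivative of S
  have hS' : ∀ t, 0 ≤ t → HasDerivAt S (-(g t)) t := by
    intro t ht
    have h1 := hasDerivAt_quad hΛ₁.isHermitian (Hv₁ t)
    have h2' := hasDerivAt_quad hK.isHermitian (Hy₁ t)
    have h3 := hasDerivAt_quad hΛ₂.isHermitian (Hv₂ t)
    have h4 := hasDerivAt_quad hK.isHermitian (Hy₂ t)
    have h5 := hasDerivAt_quad hM.isHermitian ((Hv₁ t).add (Hv₂ t))
    have H := ((h1.add h2').add (h3.add h4)).add h5
    convert H using 1
    · rfl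
    · rfl
    · rfl
    have e₁ : Λ₁ *ᵥ (deriv (deriv y₁) t) = F t - D *ᵥ deriv y₁ t - K *ᵥ y₁ t := by
      have h := hODE₁ t ht; linear_combination h
    have e₂ : Λ₂ *ᵥ (deriv (deriv y₂) t) = F t - D *ᵥ deriv y₂ t - K *ᵥ y₂ t := by
      have h := hODE₂ t ht; linear_combination h
    have e₅ : M *ᵥ (deriv (deriv y₁) t + deriv (deriv y₂) t) = -(F t) := by
      rw [hF t, neg_neg]
    have t1 : deriv (deriv y₁) t ⬝ᵥ (Λ₁ *ᵥ deriv y₁ t)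
        = deriv y₁ t ⬝ᵥ F t - deriv y₁ t ⬝ᵥ (D *ᵥ deriv y₁ t) - deriv y₁ t ⬝ᵥ (K *ᵥ y₁ t) := by
      rw [sym_dot hΛ₁.isHermitian, e₁, dotProduct_sub, dotProduct_sub]
    have t2 : deriv (deriv y₂) t ⬝ᵥ (Λ₂ *ᵥ deriv y₂ t)
        = deriv y₂ t ⬝ᵥ F t - deriv y₂ t ⬝ᵥ (D *ᵥ deriv y₂ t) - deriv y₂ t ⬝ᵥ (K *ᵥ y₂ t) := by
      rw [sym_dot hΛ₂.isHermitian, e₂, dotProduct_sub, dotProduct_sub]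
    have t5 : (deriv (deriv y₁) t + deriv (deriv y₂) t) ⬝ᵥ (M *ᵥ (deriv y₁ t + deriv y₂ t))
        = -(deriv y₁ t ⬝ᵥ F t) - deriv y₂ t ⬝ᵥ F t := by
      rw [sym_dot hM.isHermitian, e₅, dotProduct_neg, add_dotProduct]
      ring
    have tK1 : y₁ t ⬝ᵥ (K *ᵥ deriv y₁ t) = deriv y₁ t ⬝ᵥ (K *ᵥ y₁ t) := sym_dot hK.isHermitian _ _
    have tK2 : y₂ t ⬝ᵥ (K *ᵥ deriv y₂ t) = deriv y₂ t ⬝ᵥ (K *ᵥ y₂ t) := sym_dot hK.isHermitian _ _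
    rw [t1, t2, Pi.add_apply, t5, hgdef]
    ring
  -- FTC
  have key : ∀ T, 0 ≤ T → ∫ t in (0:ℝ)..T, g t = S 0 - S T := by
    intro T hT
    have hInt : IntervalIntegrable (fun t => -(g t)) volume 0 T :=
      (hgc.neg).intervalIntegrable 0 T
    have := intervalIntegral.integral_eq_sub_of_hasDerivAt (f := S)
      (f' := fun t => -(g t)) (fun t ht => by
        refine hS' t ?_
        rw [Set.uIcc_of_le hT] at ht
        exact ht.1) hInt
    have h2 : ∫ t in (0:ℝ)..T, -(g t) = -∫ t in (0:ℝ)..T, g t := intervalIntegral.integral_neg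
    rw [h2] at this
    linarith
  -- interval bound
  have hfT : ∀ T, 0 ≤ T → ∫ t in (0:ℝ)..T, f t ≤ S 0 / lam := by
    intro T hT
    have hmono : ∫ t in (0:ℝ)..T, lam * f t ≤ ∫ t in (0:ℝ)..T, g t := by
      refine intervalIntegral.integral_mono_on hT ((continuous_const.mul hfc).intervalIntegrable 0 T)
        (hgc.intervalIntegrable 0 T) (fun x _ => ?_)
      have b1 := quad_lower hD (deriv y₁ x)
      have b2 := quad_lower hD (deriv y₂ x)
      simp only [hfdef, hgdef, ← hlam]
      calc lam * (deriv y₁ x ⬝ᵥ deriv y₁ x + deriv y₂ x ⬝ᵥ deriv y₂ x)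
          = lam * (deriv y₁ x ⬝ᵥ deriv y₁ x) + lam * (deriv y₂ x ⬝ᵥ deriv y₂ x) := by ring
        _ ≤ _ := add_le_add b1 b2
    rw [intervalIntegral.integral_const_mul, key T hT] at hmono
    have hST := hSnn T
    rw [le_div_iff₀ hlampos, mul_comm]
    linarith
  have hIoc : ∀ T : ℝ, IntegrableOn f (Set.Ioc (0:ℝ) T) := fun T =>
    hfc.integrableOn_Ioc
  have hIoi : IntegrableOn f (Set.Ioi (0:ℝ)) := by
    refine integrableOn_Ioi_of_intervalIntegral_norm_bounded (S 0 / lam) 0 hIoc tendsto_id ?_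
    filter_upwards [eventually_ge_atTop (0:ℝ)] with T hT
    have : ∫ x in (0:ℝ)..T, ‖f x‖ = ∫ x in (0:ℝ)..T, f x := by
      refine intervalIntegral.integral_congr fun x _ => Real.norm_of_nonneg (hfnn x)
    rw [this]
    exact hfT T hT
  have hIci : IntegrableOn f (Set.Ici (0:ℝ)) := by
    rwa [integrableOn_Ici_iff_integrableOn_Ioi]
  refine ⟨hIci, ?_⟩
  have hintval : ∫ t in Set.Ici (0:ℝ), f t = ∫ t in Set.Ioi (0:ℝ), f t :=
    integral_Ici_eq_integral_Ioi
  have htend := intervalIntegral_tendsto_integral_Ioi 0 hIoi tendsto_id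
  have hle : ∫ t in Set.Ioi (0:ℝ), f t ≤ S 0 / lam := by
    refine le_of_tendsto htend ?_
    filter_upwards [eventually_ge_atTop (0:ℝ)] with T hT
    exact hfT T hT
  calc ∫ t in Set.Ici (0:ℝ), f t = ∫ t in Set.Ioi (0:ℝ), f t := hintval
    _ ≤ S 0 / lam := hle
end

section
/- Let k ≥ 1, and let Λ₁, …, Λ_k, D₁, …, D_k, K₁, …, K_k, M be symmetric positive definite real n×n matrices. Let y₁, …, y_k : [0,∞) → ℝⁿ be C² curves satisfying Λᵢ·yᵢ'' + Dᵢ·yᵢ' + Kᵢ·yᵢ = F for each i, with F = −M·Σⱼ yⱼ''. Then for each i, yᵢ'(t) → 0 as t → ∞ and yᵢ(t) converges to some limit yᵢ* ∈ ℝⁿ. (The extension of the paper's Theorem 3 to an arbitrary number of AMs, Section III.D.1: many AMs collaboratively grasping an object converge to a configuration at which they balance each other.) -/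
open Matrix Filter Topology

set_option linter.unusedSectionVars false
set_option linter.unusedVariables false
set_option maxHeartbeats 1000000

section Aux

variable {ι : Type*} [Fintype ι] [DecidableEq ι]

private lemma quad_cont (A : Matrix ι ι ℝ) : Continuous (fun x : ι → ℝ => x ⬝ᵥ (A *ᵥ x)) := by
  unfold dotProduct mulVec
  exact continuous_finset_sum _ fun i _ => (continuous_apply i).mul
    (continuous_finset_sum _ fun j _ => (continuous_const.mul (continuous_apply j)))

private lemma quad_smul (A : Matrix ι ι ℝ) (s : ℝ) (x : ι → ℝ) :
    (s • x) ⬝ᵥ (A *ᵥ (s • x)) = s^2 * (x ⬝ᵥ (A *ᵥ x)) := by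
  rw [mulVec_smul, dotProduct_smul, smul_dotProduct]
  simp [smul_smul, sq]
  ring

private lemma posdef_lower (A : Matrix ι ι ℝ) (hA : ∀ x : ι → ℝ, x ≠ 0 → 0 < x ⬝ᵥ (A *ᵥ x)) :
    ∃ c > 0, ∀ x : ι → ℝ, c * ‖x‖^2 ≤ x ⬝ᵥ (A *ᵥ x) := by
  by_cases hne : Nonempty ι
  · obtain ⟨i⟩ := hne
    have hsph : (Metric.sphere (0 : ι → ℝ) 1).Nonempty := by
      refine ⟨Pi.single i 1, ?_⟩
      simp [Metric.mem_sphere, Pi.norm_single]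
    obtain ⟨u, hu, humin⟩ := (isCompact_sphere (0 : ι → ℝ) 1).exists_isMinOn hsph
      ((quad_cont A).continuousOn)
    have hunorm : ‖u‖ = 1 := by simpa using hu
    have hc : 0 < u ⬝ᵥ (A *ᵥ u) := by
      apply hA
      intro h0; rw [h0] at hunorm; simp at hunorm
    refine ⟨u ⬝ᵥ (A *ᵥ u), hc, fun x => ?_⟩
    by_cases hx : x = 0
    · simp [hx]
    · have hxn : (0:ℝ) < ‖x‖ := norm_pos_iff.2 hx
      set w : ι → ℝ := ‖x‖⁻¹ • x with hw
      have hwsph : w ∈ Metric.sphere (0 : ι → ℝ) 1 := by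
        simp [hw, norm_smul, abs_of_pos (inv_pos.2 hxn), inv_mul_cancel₀ hxn.ne']
      have h1 : u ⬝ᵥ (A *ᵥ u) ≤ w ⬝ᵥ (A *ᵥ w) := humin hwsph
      have h2 : w ⬝ᵥ (A *ᵥ w) = ‖x‖⁻¹^2 * (x ⬝ᵥ (A *ᵥ x)) := quad_smul A _ x
      have : u ⬝ᵥ (A *ᵥ u) ≤ ‖x‖⁻¹^2 * (x ⬝ᵥ (A *ᵥ x)) := h2 ▸ h1
      have h3 : (u ⬝ᵥ (A *ᵥ u)) * ‖x‖^2 ≤ x ⬝ᵥ (A *ᵥ x) := by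
        have hx2 : (0:ℝ) < ‖x‖^2 := by positivity
        calc (u ⬝ᵥ (A *ᵥ u)) * ‖x‖^2 ≤ (‖x‖⁻¹^2 * (x ⬝ᵥ (A *ᵥ x))) * ‖x‖^2 := by
              nlinarith
          _ = x ⬝ᵥ (A *ᵥ x) := by field_simp
      linarith
  · refine ⟨1, one_pos, fun x => ?_⟩
    have : x = 0 := funext fun i => absurd ⟨i⟩ hne
    simp [this]

private lemma quad_upper (A : Matrix ι ι ℝ) :
    ∃ C > 0, ∀ x w : ι → ℝ, |x ⬝ᵥ (A *ᵥ w)| ≤ C * ‖x‖ * ‖w‖ := by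
  refine ⟨(∑ p, ∑ q, |A p q|) + 1, by positivity, fun x w => ?_⟩
  unfold dotProduct mulVec
  calc |∑ p, x p * ∑ q, A p q * w q| ≤ ∑ p, |x p * ∑ q, A p q * w q| :=
        Finset.abs_sum_le_sum_abs _ _
    _ ≤ ∑ p, ∑ q, |A p q| * ‖x‖ * ‖w‖ := by
        apply Finset.sum_le_sum
        intro p _
        rw [abs_mul]
        calc |x p| * |∑ q, A p q * w q| ≤ ‖x‖ * ∑ q, |A p q| * ‖w‖ := by
              apply mul_le_mul (norm_le_pi_norm x p) ?_ (abs_nonneg _) (norm_nonneg _)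
              calc |∑ q, A p q * w q| ≤ ∑ q, |A p q * w q| := Finset.abs_sum_le_sum_abs _ _
                _ ≤ ∑ q, |A p q| * ‖w‖ := by
                    apply Finset.sum_le_sum; intro q _
                    rw [abs_mul]
                    exact mul_le_mul_of_nonneg_left (norm_le_pi_norm w q) (abs_nonneg _)
          _ = ∑ q, |A p q| * ‖x‖ * ‖w‖ := by
              rw [Finset.mul_sum]; exact Finset.sum_congr rfl fun q _ => by ring
    _ = (∑ p, ∑ q, |A p q|) * ‖x‖ * ‖w‖ := by rw [Finset.sum_mul, Finset.sum_mul]; simp [Finset.sum_mul]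
    _ ≤ ((∑ p, ∑ q, |A p q|) + 1) * ‖x‖ * ‖w‖ := by
        have : (0:ℝ) ≤ ∑ p, ∑ q, |A p q| := by positivity
        nlinarith [norm_nonneg x, norm_nonneg w]

private lemma hasDerivAt_quad_s14 (A : Matrix ι ι ℝ) (X W X' W' : ℝ → ι → ℝ) (t : ℝ)
    (hX : ∀ p, HasDerivAt (fun s => X s p) (X' t p) t)
    (hW : ∀ p, HasDerivAt (fun s => W s p) (W' t p) t) :
    HasDerivAt (fun s => (X s) ⬝ᵥ (A *ᵥ (W s)))
      ((X' t) ⬝ᵥ (A *ᵥ (W t)) + (X t) ⬝ᵥ (A *ᵥ (W' t))) t := by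
  have key : ∀ (a b : ι → ℝ), a ⬝ᵥ (A *ᵥ b) = ∑ p, ∑ q, A p q * (a p * b q) := by
    intro a b
    simp only [dotProduct, mulVec, Finset.mul_sum]
    exact Finset.sum_congr rfl fun p _ => Finset.sum_congr rfl fun q _ => by ring
  have h : HasDerivAt (fun s => ∑ p, ∑ q, A p q * (X s p * W s q))
      (∑ p, ∑ q, A p q * (X' t p * W t q + X t p * W' t q)) t := by
    apply HasDerivAt.fun_sum
    intro p _
    apply HasDerivAt.fun_sum
    intro q _
    exact ((hX p).mul (hW q)).const_mul (A p q)
  have heq : (∑ p, ∑ q, A p q * (X' t p * W t q + X t p * W' t q)) =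
      (X' t) ⬝ᵥ (A *ᵥ (W t)) + (X t) ⬝ᵥ (A *ᵥ (W' t)) := by
    rw [key, key]
    simp only [mul_add, Finset.sum_add_distrib]
  rw [← heq]
  apply h.congr_of_eventuallyEq
  filter_upwards with s using key (X s) (W s)

private lemma gronwall_decay (V V' : ℝ → ℝ) (α : ℝ) (hα : 0 < α)
    (hV : ∀ t, HasDerivAt V (V' t) t)
    (hle : ∀ t, 0 ≤ t → V' t ≤ -α * V t) :
    ∀ t, 0 ≤ t → V t ≤ V 0 * Real.exp (-α * t) := by
  set g : ℝ → ℝ := fun t => V t * Real.exp (α * t) with hg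
  have hg' : ∀ t, HasDerivAt g ((V' t + α * V t) * Real.exp (α * t)) t := by
    intro t
    have h1 : HasDerivAt (fun t => Real.exp (α * t)) (α * Real.exp (α * t)) t := by
      simpa [mul_comm, Function.comp_def] using (Real.hasDerivAt_exp (α * t)).comp t
        ((hasDerivAt_id t).const_mul α)
    have := (hV t).fun_mul h1
    exact this.congr_deriv (by ring)
  have hanti : AntitoneOn g (Set.Ici 0) := by
    apply antitoneOn_of_deriv_nonpos (convex_Ici 0)
    · exact fun t _ => ((hg' t).continuousAt).continuousWithinAt
    · intro t ht
      exact (hg' t).differentiableAt.differentiableWithinAt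
    · intro t ht
      rw [(hg' t).deriv]
      rw [interior_Ici] at ht
      have := hle t (le_of_lt ht)
      have hexp : (0:ℝ) < Real.exp (α * t) := Real.exp_pos _
      nlinarith
  intro t ht
  have := hanti (Set.self_mem_Ici) ht ht
  simp only [hg, mul_zero, Real.exp_zero, mul_one] at this
  have hexp : (0:ℝ) < Real.exp (α * t) := Real.exp_pos _
  have h2 : V t ≤ V 0 / Real.exp (α * t) := (le_div_iff₀ hexp).2 this
  have h3 : V 0 * Real.exp (-α * t) = V 0 / Real.exp (α * t) := by
    rw [neg_mul, Real.exp_neg, div_eq_mul_inv]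
  rw [h3]; exact h2

end Aux

section Blk

variable {n k : ℕ}

/-- block diagonal big matrix -/
private def blkM (B : Fin k → Matrix (Fin n) (Fin n) ℝ) :
    Matrix (Fin k × Fin n) (Fin k × Fin n) ℝ :=
  fun p q => if p.1 = q.1 then B p.1 p.2 q.2 else 0

/-- "ones ⊗ M" big matrix -/
private def oneM (M : Matrix (Fin n) (Fin n) ℝ) :
    Matrix (Fin k × Fin n) (Fin k × Fin n) ℝ :=
  fun p q => M p.2 q.2

private lemma blk_mulVec_apply (B : Fin k → Matrix (Fin n) (Fin n) ℝ) (w : Fin k × Fin n → ℝ)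
    (i : Fin k) (a : Fin n) :
    (blkM B *ᵥ w) (i, a) = (B i *ᵥ fun b => w (i, b)) a := by
  simp only [blkM, mulVec, dotProduct, Fintype.sum_prod_type]
  rw [Finset.sum_eq_single i]
  · simp [mulVec, dotProduct]
  · intro j _ hj
    simp [Ne.symm hj]
  · simp

private lemma one_mulVec_apply (M : Matrix (Fin n) (Fin n) ℝ) (w : Fin k × Fin n → ℝ)
    (i : Fin k) (a : Fin n) :
    (oneM M *ᵥ w) (i, a) = (M *ᵥ fun b => ∑ j, w (j, b)) a := by
  simp only [oneM, mulVec, dotProduct, Fintype.sum_prod_type]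
  rw [Finset.sum_comm]
  refine Finset.sum_congr rfl fun b _ => ?_
  rw [Finset.mul_sum]

private lemma blk_quad (B : Fin k → Matrix (Fin n) (Fin n) ℝ) (u w : Fin k × Fin n → ℝ) :
    u ⬝ᵥ (blkM B *ᵥ w) = ∑ i, (fun a => u (i, a)) ⬝ᵥ (B i *ᵥ fun b => w (i, b)) := by
  simp only [dotProduct]
  rw [Fintype.sum_prod_type]
  refine Finset.sum_congr rfl fun i _ => Finset.sum_congr rfl fun a _ => ?_
  rw [blk_mulVec_apply]

private lemma one_quad (M : Matrix (Fin n) (Fin n) ℝ) (u w : Fin k × Fin n → ℝ) :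
    u ⬝ᵥ (oneM M *ᵥ w) = (fun a => ∑ i, u (i, a)) ⬝ᵥ (M *ᵥ fun b => ∑ j, w (j, b)) := by
  simp only [dotProduct]
  rw [Fintype.sum_prod_type, Finset.sum_comm]
  refine Finset.sum_congr rfl fun a _ => ?_
  rw [Finset.sum_mul]
  refine Finset.sum_congr rfl fun i _ => ?_
  rw [one_mulVec_apply]

private lemma dot_swap {ι : Type*} [Fintype ι] (A : Matrix ι ι ℝ)
    (hsym : ∀ p q, A p q = A q p)
    (u w : ι → ℝ) : u ⬝ᵥ (A *ᵥ w) = w ⬝ᵥ (A *ᵥ u) := by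
  have key : ∀ (a b : ι → ℝ), a ⬝ᵥ (A *ᵥ b) = ∑ p, ∑ q, A p q * (a p * b q) := by
    intro a b
    simp only [dotProduct, mulVec, Finset.mul_sum]
    exact Finset.sum_congr rfl fun p _ => Finset.sum_congr rfl fun q _ => by ring
  rw [key, key, Finset.sum_comm]
  exact Finset.sum_congr rfl fun p _ => Finset.sum_congr rfl fun q _ => by
    rw [hsym q p]; ring

private lemma posdef_entry_symm (A : Matrix (Fin n) (Fin n) ℝ) (h : A.PosDef) (a b : Fin n) :
    A a b = A b a := by
  have h2 := congrFun (congrFun h.1.eq a) b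
  simpa [Matrix.conjTranspose_apply] using h2.symm

private lemma blk_posdef (B : Fin k → Matrix (Fin n) (Fin n) ℝ) (hB : ∀ i, (B i).PosDef) :
    ∀ x : Fin k × Fin n → ℝ, x ≠ 0 → 0 < x ⬝ᵥ (blkM B *ᵥ x) := by
  intro x hx
  rw [blk_quad]
  obtain ⟨p, hp⟩ : ∃ p, x p ≠ 0 := by
    by_contra h; push_neg at h; exact hx (funext h)
  apply Finset.sum_pos'
  · intro i _
    have := (hB i).posSemidef.dotProduct_mulVec_nonneg (fun a => x (i, a))
    simpa using this
  · refine ⟨p.1, Finset.mem_univ _, ?_⟩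
    have hne : (fun a => x (p.1, a)) ≠ 0 := by
      intro h
      exact hp (by simpa using congrFun h p.2)
    have := (hB p.1).dotProduct_mulVec_pos hne
    simpa using this

private lemma big_posdef (Λ : Fin k → Matrix (Fin n) (Fin n) ℝ)
    (M : Matrix (Fin n) (Fin n) ℝ) (hΛ : ∀ i, (Λ i).PosDef) (hM : M.PosSemidef) :
    ∀ x : Fin k × Fin n → ℝ, x ≠ 0 → 0 < x ⬝ᵥ ((blkM Λ + oneM M) *ᵥ x) := by
  intro x hx
  rw [add_mulVec, dotProduct_add]
  have h1 := blk_posdef Λ hΛ x hx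
  have h2 : 0 ≤ x ⬝ᵥ (oneM M *ᵥ x) := by
    rw [one_quad]
    have := hM.dotProduct_mulVec_nonneg (fun a => ∑ i, x (i, a))
    simpa using this
  linarith

private lemma blk_entry_symm (B : Fin k → Matrix (Fin n) (Fin n) ℝ)
    (hB : ∀ i, (B i).PosDef) (p q : Fin k × Fin n) : blkM B p q = blkM B q p := by
  simp only [blkM]
  rcases eq_or_ne p.1 q.1 with h | h
  · rw [if_pos h, if_pos h.symm, h]
    exact posdef_entry_symm _ (hB q.1) _ _
  · rw [if_neg h, if_neg (Ne.symm h)]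

end Blk

/-- Extension of Theorem 3 to an arbitrary number of AMs
(Section III.D.1).  With `F = −M Σⱼ yⱼ''`, every velocity `yᵢ'` tends to `0`
and every configuration `yᵢ` converges to some limit `yᵢ*`. -/
theorem stmt_14 {n k : ℕ} (hk : 1 ≤ k)
    (Λ D K : Fin k → Matrix (Fin n) (Fin n) ℝ) (M : Matrix (Fin n) (Fin n) ℝ)
    (hΛ : ∀ i, (Λ i).PosDef) (hD : ∀ i, (D i).PosDef) (hK : ∀ i, (K i).PosDef)
    (hM : M.PosDef)
    (y : Fin k → ℝ → Fin n → ℝ) (hy : ∀ i, ContDiff ℝ 2 (y i))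
    (F : ℝ → Fin n → ℝ)
    (hF : ∀ t : ℝ, F t = -(M *ᵥ (∑ j, deriv (deriv (y j)) t)))
    (hODE : ∀ i, ∀ t : ℝ, 0 ≤ t →
      Λ i *ᵥ (deriv (deriv (y i)) t) + D i *ᵥ (deriv (y i) t) + K i *ᵥ (y i t) = F t) :
    ∀ i, Tendsto (deriv (y i)) atTop (𝓝 0) ∧
      ∃ ystar : Fin n → ℝ, Tendsto (y i) atTop (𝓝 ystar) := by
  classical
  have hyd : ∀ i, Differentiable ℝ (y i) ∧ Differentiable ℝ (deriv (y i)) := by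
    intro i
    have h3 := contDiff_succ_iff_deriv.mp (show ContDiff ℝ (1+1) (y i) by norm_num [hy i])
    exact ⟨h3.1, h3.2.2.differentiable one_ne_zero⟩
  -- big state vectors
  set X : ℝ → Fin k × Fin n → ℝ := fun t p => y p.1 t p.2 with hXdef
  set Vl : ℝ → Fin k × Fin n → ℝ := fun t p => deriv (y p.1) t p.2 with hVldef
  set Ac : ℝ → Fin k × Fin n → ℝ := fun t p => deriv (deriv (y p.1)) t p.2 with hAcdef
  have hXd : ∀ (t : ℝ) (p : Fin k × Fin n), HasDerivAt (fun s => X s p) (Vl t p) t := by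
    intro t p
    exact hasDerivAt_pi.mp ((hyd p.1).1 t).hasDerivAt p.2
  have hVd : ∀ (t : ℝ) (p : Fin k × Fin n), HasDerivAt (fun s => Vl s p) (Ac t p) t := by
    intro t p
    exact hasDerivAt_pi.mp ((hyd p.1).2 t).hasDerivAt p.2
  -- big matrices
  set MM : Matrix (Fin k × Fin n) (Fin k × Fin n) ℝ := blkM Λ + oneM M with hMMdef
  set DD : Matrix (Fin k × Fin n) (Fin k × Fin n) ℝ := blkM D with hDDdef
  set KK : Matrix (Fin k × Fin n) (Fin k × Fin n) ℝ := blkM K with hKKdef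
  have hsymM : ∀ p q, MM p q = MM q p := by
    intro p q
    simp only [hMMdef, Matrix.add_apply, oneM]
    rw [blk_entry_symm Λ hΛ, posdef_entry_symm M hM]
  have hsymD : ∀ p q, DD p q = DD q p := fun p q => blk_entry_symm D hD p q
  have hsymK : ∀ p q, KK p q = KK q p := fun p q => blk_entry_symm K hK p q
  -- the coupled ODE in big form
  have hbig : ∀ t : ℝ, 0 ≤ t → MM *ᵥ Ac t = -(DD *ᵥ Vl t) - (KK *ᵥ X t) := by
    intro t ht
    funext p
    obtain ⟨i, a⟩ := p
    have hode := hODE i t ht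
    rw [hF t] at hode
    have hcoord := congrFun hode a
    simp only [Pi.add_apply, Pi.neg_apply] at hcoord
    have hsum : (fun b => ∑ j, Ac t (j, b)) = (∑ j, deriv (deriv (y j)) t) := by
      funext b; rw [Finset.sum_apply]
    have hL : (MM *ᵥ Ac t) (i, a)
        = (Λ i *ᵥ (deriv (deriv (y i)) t)) a + (M *ᵥ (∑ j, deriv (deriv (y j)) t)) a := by
      rw [hMMdef, add_mulVec, Pi.add_apply, blk_mulVec_apply, one_mulVec_apply, hsum]
    have hR : (-(DD *ᵥ Vl t) - (KK *ᵥ X t)) (i, a)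
        = -((D i *ᵥ (deriv (y i) t)) a) - ((K i *ᵥ (y i t)) a) := by
      simp only [Pi.sub_apply, Pi.neg_apply, hDDdef, hKKdef]
      rw [blk_mulVec_apply, blk_mulVec_apply]
    rw [hL, hR]
    linarith
  -- positive definiteness and bounds
  have hMMpos : ∀ x, x ≠ 0 → 0 < x ⬝ᵥ (MM *ᵥ x) := big_posdef Λ M hΛ hM.posSemidef
  have hDDpos : ∀ x, x ≠ 0 → 0 < x ⬝ᵥ (DD *ᵥ x) := blk_posdef D hD
  have hKKpos : ∀ x, x ≠ 0 → 0 < x ⬝ᵥ (KK *ᵥ x) := blk_posdef K hK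
  obtain ⟨cM, hcM, hcMl⟩ := posdef_lower MM hMMpos
  obtain ⟨cD, hcD, hcDl⟩ := posdef_lower DD hDDpos
  obtain ⟨cK, hcK, hcKl⟩ := posdef_lower KK hKKpos
  obtain ⟨CM, hCM, hCMu⟩ := quad_upper MM
  obtain ⟨CD, hCD, hCDu⟩ := quad_upper DD
  obtain ⟨CK, hCK, hCKu⟩ := quad_upper KK
  set m0 : ℝ := min cM cK with hm0def
  have hm0 : 0 < m0 := lt_min hcM hcK
  have hm0M : m0 ≤ cM := min_le_left _ _
  have hm0K : m0 ≤ cK := min_le_right _ _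
  set ε : ℝ := min (cD * cK / (2*(CM*cK + CD^2 + cK))) (m0/(2*(CM+1))) with hεdef
  have hε : 0 < ε := lt_min (by positivity) (by positivity)
  have hε1 : 2*ε*(CM*cK + CD^2 + cK) ≤ cD*cK := by
    have h := min_le_left (cD * cK / (2*(CM*cK + CD^2 + cK))) (m0/(2*(CM+1)))
    have hpos : (0:ℝ) < 2*(CM*cK + CD^2 + cK) := by positivity
    calc 2*ε*(CM*cK + CD^2 + cK) = ε * (2*(CM*cK + CD^2 + cK)) := by ring
      _ ≤ (cD * cK / (2*(CM*cK + CD^2 + cK))) * (2*(CM*cK + CD^2 + cK)) := by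
          apply mul_le_mul_of_nonneg_right _ hpos.le
          rw [hεdef]; exact h
      _ = cD*cK := div_mul_cancel₀ _ hpos.ne'
  have hε2 : 2*ε*(CM+1) ≤ m0 := by
    have h := min_le_right (cD * cK / (2*(CM*cK + CD^2 + cK))) (m0/(2*(CM+1)))
    have hpos : (0:ℝ) < 2*(CM+1) := by positivity
    calc 2*ε*(CM+1) = ε * (2*(CM+1)) := by ring
      _ ≤ (m0/(2*(CM+1))) * (2*(CM+1)) := by
          apply mul_le_mul_of_nonneg_right _ hpos.le
          rw [hεdef]; exact h
      _ = m0 := div_mul_cancel₀ _ hpos.ne'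
  set γ : ℝ := m0/4 with hγdef
  have hγ : 0 < γ := by positivity
  set β : ℝ := min (cD/2) (ε*cK/2) with hβdef
  have hβ : 0 < β := lt_min (by positivity) (by positivity)
  set Cb : ℝ := CM + CK + ε*CM + 1 with hCbdef
  have hCb : 0 < Cb := by positivity
  set α : ℝ := β/Cb with hαdef
  have hα : 0 < α := by positivity
  have hαCb : α * Cb = β := div_mul_cancel₀ _ hCb.ne'
  -- Lyapunov function
  set Vfun : ℝ → ℝ := fun t => (1/2)*(Vl t ⬝ᵥ (MM *ᵥ Vl t)) + (1/2)*(X t ⬝ᵥ (KK *ᵥ X t))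
      + ε*(X t ⬝ᵥ (MM *ᵥ Vl t)) with hVfundef
  set Vdot : ℝ → ℝ := fun t => (1/2)*((Ac t ⬝ᵥ (MM *ᵥ Vl t)) + (Vl t ⬝ᵥ (MM *ᵥ Ac t)))
      + (1/2)*((Vl t ⬝ᵥ (KK *ᵥ X t)) + (X t ⬝ᵥ (KK *ᵥ Vl t)))
      + ε*((Vl t ⬝ᵥ (MM *ᵥ Vl t)) + (X t ⬝ᵥ (MM *ᵥ Ac t))) with hVdotdef
  have hVder : ∀ t, HasDerivAt Vfun (Vdot t) t := by
    intro t
    simp only [hVfundef, hVdotdef]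
    exact (((hasDerivAt_quad_s14 MM Vl Vl Ac Ac t (hVd t) (hVd t)).const_mul (1/2:ℝ)).add
      ((hasDerivAt_quad_s14 KK X X Vl Vl t (hXd t) (hXd t)).const_mul (1/2:ℝ))).add
      ((hasDerivAt_quad_s14 MM X Vl Vl Ac t (hXd t) (hVd t)).const_mul ε)
  -- lower bound for the Lyapunov function
  have hlow : ∀ t : ℝ, γ*(‖X t‖^2 + ‖Vl t‖^2) ≤ Vfun t := by
    intro t
    have ha : (0:ℝ) ≤ ‖X t‖ := norm_nonneg _
    have hb : (0:ℝ) ≤ ‖Vl t‖ := norm_nonneg _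
    have hQm := hcMl (Vl t)
    have hQk := hcKl (X t)
    have hQxm := (abs_le.mp (hCMu (X t) (Vl t))).1
    simp only [hVfundef, hγdef]
    nlinarith [mul_nonneg (sub_nonneg.2 hm0M) (sq_nonneg ‖Vl t‖),
      mul_nonneg (sub_nonneg.2 hm0K) (sq_nonneg ‖X t‖),
      mul_nonneg (sub_nonneg.2 hε2) (mul_nonneg ha hb),
      mul_nonneg hm0.le (sq_nonneg (‖X t‖ - ‖Vl t‖)),
      mul_nonneg hε.le (mul_nonneg ha hb),
      mul_nonneg hε.le (sub_nonneg.2 hQxm)]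
  -- upper bound for the Lyapunov function
  have hup : ∀ t : ℝ, Vfun t ≤ Cb * (‖X t‖^2 + ‖Vl t‖^2) := by
    intro t
    have ha : (0:ℝ) ≤ ‖X t‖ := norm_nonneg _
    have hb : (0:ℝ) ≤ ‖Vl t‖ := norm_nonneg _
    have hQmu := (abs_le.mp (hCMu (Vl t) (Vl t))).2
    have hQku := (abs_le.mp (hCKu (X t) (X t))).2
    have hQxmu := (abs_le.mp (hCMu (X t) (Vl t))).2
    simp only [hVfundef, hCbdef]
    nlinarith [mul_nonneg hε.le (mul_nonneg hCM.le (sq_nonneg (‖X t‖ - ‖Vl t‖))),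
      sq_nonneg ‖X t‖, sq_nonneg ‖Vl t‖, mul_nonneg ha hb, hε.le, hCM.le]
  -- derivative bound
  have hbound : ∀ t : ℝ, 0 ≤ t → Vdot t ≤ -α * Vfun t := by
    intro t ht
    have ha : (0:ℝ) ≤ ‖X t‖ := norm_nonneg _
    have hb : (0:ℝ) ≤ ‖Vl t‖ := norm_nonneg _
    have hQd := hcDl (Vl t)
    have hQk := hcKl (X t)
    have hQmu := (abs_le.mp (hCMu (Vl t) (Vl t))).2
    have hQxd := (abs_le.mp (hCDu (X t) (Vl t))).1
    have hMA := hbig t ht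
    have e1 : Ac t ⬝ᵥ (MM *ᵥ Vl t) = Vl t ⬝ᵥ (MM *ᵥ Ac t) := dot_swap MM hsymM _ _
    have e2 : Vl t ⬝ᵥ (MM *ᵥ Ac t)
        = -(Vl t ⬝ᵥ (DD *ᵥ Vl t)) - (Vl t ⬝ᵥ (KK *ᵥ X t)) := by
      rw [hMA, dotProduct_sub, dotProduct_neg]
    have e3 : X t ⬝ᵥ (MM *ᵥ Ac t)
        = -(X t ⬝ᵥ (DD *ᵥ Vl t)) - (X t ⬝ᵥ (KK *ᵥ X t)) := by
      rw [hMA, dotProduct_sub, dotProduct_neg]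
    have e4 : Vl t ⬝ᵥ (KK *ᵥ X t) = X t ⬝ᵥ (KK *ᵥ Vl t) := dot_swap KK hsymK _ _
    have eV : Vdot t = -(Vl t ⬝ᵥ (DD *ᵥ Vl t)) + ε*(Vl t ⬝ᵥ (MM *ᵥ Vl t))
        - ε*(X t ⬝ᵥ (DD *ᵥ Vl t)) - ε*(X t ⬝ᵥ (KK *ᵥ X t)) := by
      simp only [hVdotdef]
      rw [e1, e2, e3, e4]
      ring
    have key : (2*cK) * (Vdot t)
        ≤ (2*cK) * (-(cD/2)*‖Vl t‖^2 - (ε*cK/2)*‖X t‖^2) := by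
      rw [eV]
      nlinarith [mul_nonneg hcK.le (sub_nonneg.2 hQd),
        mul_nonneg (mul_nonneg hε.le hcK.le) (sub_nonneg.2 hQmu),
        mul_nonneg (mul_nonneg hε.le hcK.le) (sub_nonneg.2 hQxd),
        mul_nonneg (mul_nonneg hε.le hcK.le) (sub_nonneg.2 hQk),
        mul_nonneg hε.le (sq_nonneg (CD*‖Vl t‖ - cK*‖X t‖)),
        mul_nonneg (sub_nonneg.2 hε1) (sq_nonneg ‖Vl t‖),
        mul_nonneg hε.le (sq_nonneg ‖Vl t‖),
        mul_nonneg hε.le (mul_nonneg (sq_nonneg CD) (sq_nonneg ‖Vl t‖)),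
        mul_nonneg (mul_nonneg hε.le hcK.le) (sq_nonneg ‖Vl t‖)]
    have step2 : Vdot t ≤ -(cD/2)*‖Vl t‖^2 - (ε*cK/2)*‖X t‖^2 :=
      le_of_mul_le_mul_left key (by positivity : (0:ℝ) < 2*cK)
    have step3 : -(cD/2)*‖Vl t‖^2 - (ε*cK/2)*‖X t‖^2 ≤ -(β*(‖X t‖^2 + ‖Vl t‖^2)) := by
      have h1 : β ≤ cD/2 := min_le_left _ _
      have h2 : β ≤ ε*cK/2 := min_le_right _ _
      nlinarith [sq_nonneg ‖X t‖, sq_nonneg ‖Vl t‖]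
    have step4 : -(β*(‖X t‖^2 + ‖Vl t‖^2)) ≤ -α * Vfun t := by
      have h5 : α * Vfun t ≤ α * (Cb*(‖X t‖^2 + ‖Vl t‖^2)) :=
        mul_le_mul_of_nonneg_left (hup t) hα.le
      have h6 : α * (Cb*(‖X t‖^2 + ‖Vl t‖^2)) = β*(‖X t‖^2 + ‖Vl t‖^2) := by
        rw [← mul_assoc, hαCb]
      linarith
    exact le_trans step2 (le_trans step3 step4)
  -- Gronwall decay
  have hdec := gronwall_decay Vfun Vdot α hα hVder hbound
  -- the exponential bound tends to zero
  have hexp0 : Tendsto (fun t : ℝ => (Vfun 0 * Real.exp (-α * t))/γ) atTop (𝓝 0) := by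
    have h1 : Tendsto (fun t : ℝ => Real.exp (-α * t)) atTop (𝓝 0) := by
      apply Real.tendsto_exp_atBot.comp
      exact tendsto_id.const_mul_atTop_of_neg (neg_neg_iff_pos.2 hα)
    have h2 := (h1.const_mul (Vfun 0)).div_const γ
    simpa using h2
  -- squeeze for the squared norms
  have hsq : ∀ (Z : ℝ → Fin k × Fin n → ℝ),
      (∀ t : ℝ, 0 ≤ t → γ * ‖Z t‖^2 ≤ Vfun t) →
      Tendsto (fun t => ‖Z t‖) atTop (𝓝 0) := by
    intro Z hZ
    have hsq2 : Tendsto (fun t => ‖Z t‖^2) atTop (𝓝 0) := by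
      apply squeeze_zero' ?_ ?_ hexp0
      · filter_upwards with t; positivity
      · filter_upwards [eventually_ge_atTop (0:ℝ)] with t ht
        have h1 := hZ t ht
        have h2 := hdec t ht
        rw [div_eq_mul_inv, ← div_eq_mul_inv, le_div_iff₀ hγ]
        nlinarith
    have h2 := (Real.continuous_sqrt.continuousAt (x := 0)).tendsto.comp hsq2
    simp only [Real.sqrt_zero] at h2
    refine h2.congr fun t => ?_
    simp [Real.sqrt_sq (norm_nonneg (Z t))]
  have hXnorm : Tendsto (fun t => ‖X t‖) atTop (𝓝 0) := by
    apply hsq X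
    intro t ht
    have h1 := hlow t
    nlinarith [sq_nonneg ‖Vl t‖, hγ.le]
  have hVnorm : Tendsto (fun t => ‖Vl t‖) atTop (𝓝 0) := by
    apply hsq Vl
    intro t ht
    have h1 := hlow t
    nlinarith [sq_nonneg ‖X t‖, hγ.le]
  -- conclude
  intro i
  constructor
  · rw [tendsto_pi_nhds]
    intro a
    have hle : ∀ t, ‖deriv (y i) t a‖ ≤ ‖Vl t‖ := fun t => norm_le_pi_norm (Vl t) (i, a)
    simpa using squeeze_zero_norm hle hVnorm
  · refine ⟨0, ?_⟩
    rw [tendsto_pi_nhds]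
    intro a
    have hle : ∀ t, ‖y i t a‖ ≤ ‖X t‖ := fun t => norm_le_pi_norm (X t) (i, a)
    simpa using squeeze_zero_norm hle hXnorm
end

section
/- Let m = n + 6, let M be a symmetric positive definite real m×m matrix, let J be a real 6×m matrix, and let Z be a real n×m matrix of full row rank with Z·Jᵀ = 0. Then Z·M·Zᵀ is symmetric positive definite (in particular invertible), and the dynamically consistent nullspace projector N = (Z·M·Zᵀ)⁻¹·Z·M satisfies N·M⁻¹·Jᵀ = 0. Consequently, if T is the m×m matrix whose first 6 rows are J and last n rows are N, the transformed inverse inertia T·M⁻¹·Tᵀ is block diagonal with respect to the (6, n) partition. (The inertial-decoupling property of the coordinate transformation of Section II.B, which makes the transformed inertia matrix Λ_ξ = (T·M⁻¹·Tᵀ)⁻¹ block-diagonal.) -/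
open Matrix

private lemma transpose_mulVec_ne_zero {n m : ℕ} (Z : Matrix (Fin n) (Fin m) ℝ)
    (hZ : Z.rank = n) {x : Fin n → ℝ} (hx : x ≠ 0) : Zᵀ *ᵥ x ≠ 0 := by
  have hrank : Zᵀ.rank = n := by rw [Matrix.rank_transpose, hZ]
  have hker : LinearMap.ker Zᵀ.mulVecLin = ⊥ := by
    have hrn := Zᵀ.mulVecLin.finrank_range_add_finrank_ker
    rw [Module.finrank_pi] at hrn
    simp only [Fintype.card_fin] at hrn
    have : Module.finrank ℝ (LinearMap.range Zᵀ.mulVecLin) = n := hrank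
    rw [Submodule.finrank_eq_zero.symm]
    omega
  intro h
  exact hx (LinearMap.ker_eq_bot'.mp hker x (by simpa [Matrix.mulVec_transpose] using h))

/-- Inertial decoupling property of the coordinate transformation
of Section II.B.  For a positive definite inertia `M`, a task Jacobian `J`
(6 rows) and a full-row-rank nullspace base matrix `Z` with `Z Jᵀ = 0`:
`Z M Zᵀ` is positive definite, the dynamically consistent nullspace projector
`N = (Z M Zᵀ)⁻¹ Z M` satisfies `N M⁻¹ Jᵀ = 0`, and the transformed inverse
inertia `T M⁻¹ Tᵀ` (with `T = [J; N]`) is block diagonal. -/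
theorem stmt_17 {n : ℕ}
    (M : Matrix (Fin (n + 6)) (Fin (n + 6)) ℝ) (hM : M.PosDef)
    (J : Matrix (Fin 6) (Fin (n + 6)) ℝ)
    (Z : Matrix (Fin n) (Fin (n + 6)) ℝ) (hZ : Z.rank = n)
    (hZJ : Z * Jᵀ = 0) :
    (Z * M * Zᵀ).PosDef ∧
    ∀ N : Matrix (Fin n) (Fin (n + 6)) ℝ,
      N = (Z * M * Zᵀ)⁻¹ * (Z * M) →
      N * M⁻¹ * Jᵀ = 0 ∧
      Matrix.fromRows J N * M⁻¹ * (Matrix.fromRows J N)ᵀ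
        = Matrix.fromBlocks (J * M⁻¹ * Jᵀ) 0 0 (N * M⁻¹ * Nᵀ) := by
  have hZt : Zᴴ = Zᵀ := Matrix.conjTranspose_eq_transpose_of_trivial Z
  have hpos : (Z * M * Zᵀ).PosDef := by
    refine Matrix.PosDef.of_dotProduct_mulVec_pos ?_ ?_
    · have := (hM.posSemidef.mul_mul_conjTranspose_same Z).1
      rwa [hZt] at this
    · intro x hx
      have hv : Zᵀ *ᵥ x ≠ 0 := transpose_mulVec_ne_zero Z hZ hx
      have h1 := hM.dotProduct_mulVec_pos hv
      have key : star x ⬝ᵥ (Z * M * Zᵀ) *ᵥ x = star (Zᵀ *ᵥ x) ⬝ᵥ M *ᵥ (Zᵀ *ᵥ x) := by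
        rw [← Matrix.mulVec_mulVec, ← Matrix.mulVec_mulVec, Matrix.dotProduct_mulVec,
          star_trivial, star_trivial, ← Matrix.mulVec_transpose]
      rw [key]; exact h1
  refine ⟨hpos, fun N hN => ?_⟩
  have hMdet : IsUnit M.det := isUnit_iff_ne_zero.mpr hM.det_pos.ne'
  have hNJ : N * M⁻¹ * Jᵀ = 0 := by
    simp only [hN, Matrix.mul_assoc, Matrix.mul_nonsing_inv_cancel_left _ _ hMdet]
    simp only [← Matrix.mul_assoc, hZJ]
    simp
  refine ⟨hNJ, ?_⟩
  have hMT : Mᵀ = M := by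
    rw [← Matrix.conjTranspose_eq_transpose_of_trivial]; exact hM.isHermitian
  have hMinvT : M⁻¹ᵀ = M⁻¹ := by
    rw [Matrix.transpose_nonsing_inv, hMT]
  have hJN : J * M⁻¹ * Nᵀ = 0 := by
    have := congrArg Matrix.transpose hNJ
    rwa [Matrix.transpose_mul, Matrix.transpose_mul, Matrix.transpose_transpose, hMinvT,
      Matrix.transpose_zero, ← Matrix.mul_assoc] at this
  rw [Matrix.fromRows_mul, Matrix.transpose_fromRows, Matrix.fromRows_mul_fromCols,
    hNJ, hJN]
end
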